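/- Lemma (global flow of W_k on the simplex). For every x ∈ Δ_k there exists a unique trajectory γ : ℝ → ℝ^{k+1} of W_k with γ(0) = x, and this trajectory satisfies γ(t) ∈ Δ_k for all t ∈ ℝ. -/

import Mathlib

open Finset

/-- The simplicial vector field `W_k` on `ℝ^{k+1}`, given componentwise by
`(W_k x)_m = x_m * (∑_{i<m} x_i − ∑_{i>m} x_i)`. -/
noncomputable def Wfield (k : ℕ) (x : Fin (k + 1) → ℝ) : Fin (k + 1) → ℝ :=
  fun m => x m * ((∑ i ∈ univ.filter (fun i => i < m), x i)
                - (∑ i ∈ univ.filter (fun i => m < i), x i))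


namespace WAux

/-- solution of the logistic ODE `S' = S (S - 1)` with `S 0 = s`. -/
noncomputable def sig (s t : ℝ) : ℝ := s / (s + (1 - s) * Real.exp t)

lemma denom_pos {s : ℝ} (h0 : 0 ≤ s) (h1 : s ≤ 1) (t : ℝ) :
    0 < s + (1 - s) * Real.exp t := by
  rcases eq_or_lt_of_le h0 with h | h
  · rw [← h]; simpa using Real.exp_pos t
  · have : 0 ≤ (1 - s) * Real.exp t := mul_nonneg (by linarith) (Real.exp_pos t).le
    linarith

lemma sig_zero (t : ℝ) : sig 0 t = 0 := by simp [sig]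

lemma sig_one (t : ℝ) : sig 1 t = 1 := by simp [sig]

lemma sig_init (s : ℝ) : sig s 0 = s := by
  rcases eq_or_ne s 0 with h | h
  · simp [h, sig]
  · simp [sig]

lemma sig_mono {s s' : ℝ} (h0 : 0 ≤ s) (hss : s ≤ s') (h1 : s' ≤ 1) (t : ℝ) :
    sig s t ≤ sig s' t := by
  have hd := denom_pos h0 (le_trans hss h1) t
  have hd' := denom_pos (le_trans h0 hss) h1 t
  rw [sig, sig, div_le_div_iff₀ hd hd']
  nlinarith [Real.exp_pos t, mul_nonneg (sub_nonneg.2 hss) (Real.exp_pos t).le]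

lemma sig_hasDerivAt {s : ℝ} (h0 : 0 ≤ s) (h1 : s ≤ 1) (t : ℝ) :
    HasDerivAt (sig s) (sig s t * (sig s t - 1)) t := by
  have hd := denom_pos h0 h1 t
  have hD : HasDerivAt (fun t => s + (1 - s) * Real.exp t) ((1 - s) * Real.exp t) t := by
    simpa using ((Real.hasDerivAt_exp t).const_mul (1 - s)).const_add s
  have h := (hasDerivAt_const t s).div hD hd.ne'
  convert h using 1
  · rfl
  · rfl
  · rfl
  rw [sig]
  field_simp
  ring_nf

/-- extension of `z : Fin (k+1) → ℝ` to `ℕ` by zero -/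
noncomputable def zext (k : ℕ) (z : Fin (k + 1) → ℝ) (j : ℕ) : ℝ :=
  if h : j < k + 1 then z ⟨j, h⟩ else 0

/-- partial sums -/
noncomputable def P (k : ℕ) (z : Fin (k + 1) → ℝ) (n : ℕ) : ℝ :=
  ∑ j ∈ Finset.range n, zext k z j

lemma P_top (k : ℕ) (z : Fin (k + 1) → ℝ) : P k z (k + 1) = ∑ i, z i := by
  rw [P, ← Fin.sum_univ_eq_sum_range (zext k z) (k + 1)]
  exact Finset.sum_congr rfl fun i _ => by simp [zext, i.isLt]

lemma sum_filter_val_lt (k : ℕ) (z : Fin (k + 1) → ℝ) (n : ℕ) (hn : n ≤ k + 1) :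
    ∑ i ∈ univ.filter (fun i : Fin (k + 1) => (i : ℕ) < n), z i = P k z n := by
  rw [Finset.sum_filter]
  have : ∀ i : Fin (k + 1),
      (if (i : ℕ) < n then z i else 0) = (fun j => if j < n then zext k z j else 0) (i : ℕ) := by
    intro i; simp [zext, i.isLt]
  rw [Finset.sum_congr rfl fun i _ => this i,
    Fin.sum_univ_eq_sum_range (fun j => if j < n then zext k z j else 0) (k + 1), P]
  calc (∑ i ∈ range (k + 1), if i < n then zext k z i else 0)
      = ∑ i ∈ range n, if i < n then zext k z i else 0 :=
        (Finset.sum_subset (Finset.range_subset_range.2 hn)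
          (fun j _ hj => if_neg (by simpa using hj))).symm
    _ = ∑ j ∈ range n, zext k z j :=
        Finset.sum_congr rfl fun j hj => if_pos (Finset.mem_range.1 hj)

lemma sum_filter_lt (k : ℕ) (z : Fin (k + 1) → ℝ) (m : Fin (k + 1)) :
    ∑ i ∈ univ.filter (fun i => i < m), z i = P k z m.val := by
  rw [← sum_filter_val_lt k z m.val (le_of_lt m.isLt)]
  rfl

lemma sum_filter_le (k : ℕ) (z : Fin (k + 1) → ℝ) (m : Fin (k + 1)) :
    ∑ i ∈ univ.filter (fun i => i ≤ m), z i = P k z (m.val + 1) := by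
  rw [← sum_filter_val_lt k z (m.val + 1) m.isLt]
  apply Finset.sum_congr _ (fun _ _ => rfl)
  apply Finset.filter_congr
  intro i _
  rw [Nat.lt_succ_iff, Fin.le_def]

lemma sum_filter_gt (k : ℕ) (z : Fin (k + 1) → ℝ) (m : Fin (k + 1)) :
    ∑ i ∈ univ.filter (fun i => m < i), z i = P k z (k + 1) - P k z (m.val + 1) := by
  have h := Finset.sum_filter_add_sum_filter_not univ (fun i => i ≤ m) z
  rw [P_top, ← sum_filter_le k z m, ← h]
  have : (univ.filter (fun i : Fin (k+1) => ¬ i ≤ m)) = univ.filter (fun i => m < i) := by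
    apply Finset.filter_congr; intro i _; simp
  rw [this]; ring

lemma Wfield_contDiff (k : ℕ) : ContDiff ℝ 1 (Wfield k) := by
  rw [contDiff_pi]
  intro m
  have hproj : ∀ i : Fin (k + 1), ContDiff ℝ 1 (fun x : Fin (k + 1) → ℝ => x i) :=
    fun i => (ContinuousLinearMap.proj i : (Fin (k + 1) → ℝ) →L[ℝ] ℝ).contDiff
  exact (hproj m).mul ((ContDiff.sum fun i _ => hproj i).sub (ContDiff.sum fun i _ => hproj i))

lemma Wfield_lipschitzOn (k : ℕ) (R : ℝ) :
    ∃ K : NNReal, LipschitzOnWith K (Wfield k) (Metric.closedBall 0 R) := by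
  have hW := Wfield_contDiff k
  have hc : ContinuousOn (fun y => ‖fderiv ℝ (Wfield k) y‖)
      (Metric.closedBall (0 : Fin (k+1) → ℝ) R) :=
    ((hW.continuous_fderiv one_ne_zero).norm).continuousOn
  obtain ⟨C, hC⟩ := (isCompact_closedBall (0 : Fin (k+1) → ℝ) R).exists_bound_of_continuousOn hc
  refine ⟨C.toNNReal, ?_⟩
  apply Convex.lipschitzOnWith_of_nnnorm_fderiv_le
    (fun y _ => (hW.differentiable one_ne_zero).differentiableAt) ?_ (convex_closedBall 0 R)
  intro y hy
  have h1 : ‖fderiv ℝ (Wfield k) y‖ ≤ C := by simpa using hC y hy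
  have : ‖fderiv ℝ (Wfield k) y‖ ≤ C.toNNReal := h1.trans (Real.le_coe_toNNReal C)
  exact_mod_cast this

/-- uniqueness of global solutions -/
lemma sol_unique {k : ℕ} {γ₁ γ₂ : ℝ → Fin (k + 1) → ℝ}
    (h₁ : ∀ t, HasDerivAt γ₁ (Wfield k (γ₁ t)) t)
    (h₂ : ∀ t, HasDerivAt γ₂ (Wfield k (γ₂ t)) t)
    (h0 : γ₁ 0 = γ₂ 0) : γ₁ = γ₂ := by
  funext t
  have hab : (0 : ℝ) ∈ Set.Ioo (-(|t| + 1)) (|t| + 1) := by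
    constructor <;> [nlinarith [abs_nonneg t]; nlinarith [abs_nonneg t]]
  have hc₁ : ContinuousOn γ₁ (Set.Icc (-(|t| + 1)) (|t| + 1)) :=
    fun s _ => (h₁ s).continuousAt.continuousWithinAt
  have hc₂ : ContinuousOn γ₂ (Set.Icc (-(|t| + 1)) (|t| + 1)) :=
    fun s _ => (h₂ s).continuousAt.continuousWithinAt
  obtain ⟨R₁, hR₁⟩ := ((isCompact_Icc.image_of_continuousOn hc₁).isBounded).subset_closedBall 0
  obtain ⟨R₂, hR₂⟩ := ((isCompact_Icc.image_of_continuousOn hc₂).isBounded).subset_closedBall 0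
  obtain ⟨K, hK⟩ := Wfield_lipschitzOn k (max R₁ R₂)
  have hball₁ : ∀ s ∈ Set.Ioo (-(|t| + 1)) (|t| + 1),
      γ₁ s ∈ Metric.closedBall (0 : Fin (k+1) → ℝ) (max R₁ R₂) := fun s hs =>
    Metric.closedBall_subset_closedBall (le_max_left _ _)
      (hR₁ ⟨s, Set.mem_Icc_of_Ioo hs, rfl⟩)
  have hball₂ : ∀ s ∈ Set.Ioo (-(|t| + 1)) (|t| + 1),
      γ₂ s ∈ Metric.closedBall (0 : Fin (k+1) → ℝ) (max R₁ R₂) := fun s hs =>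
    Metric.closedBall_subset_closedBall (le_max_right _ _)
      (hR₂ ⟨s, Set.mem_Icc_of_Ioo hs, rfl⟩)
  have := ODE_solution_unique_of_mem_Icc
    (v := fun _ y => Wfield k y) (s := fun _ => Metric.closedBall 0 (max R₁ R₂))
    (hv := fun _ _ => hK) hab hc₁ (fun s _ => h₁ s) hball₁ hc₂ (fun s _ => h₂ s) hball₂ h0
  exact this ⟨by nlinarith [neg_abs_le t, abs_nonneg t], by nlinarith [le_abs_self t]⟩

lemma exists_sol (k : ℕ) (x : Fin (k + 1) → ℝ) (hx : x ∈ stdSimplex ℝ (Fin (k + 1))) :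
    ∃ γ : ℝ → Fin (k + 1) → ℝ, (∀ t, HasDerivAt γ (Wfield k (γ t)) t) ∧ γ 0 = x ∧
      ∀ t, γ t ∈ stdSimplex ℝ (Fin (k + 1)) := by
  set F : ℕ → ℝ := P k x with hF
  have hxe : ∀ j, 0 ≤ zext k x j := by
    intro j; unfold zext; split
    · exact hx.1 _
    · exact le_refl 0
  have hmono : ∀ {a b : ℕ}, a ≤ b → F a ≤ F b := fun h =>
    Finset.sum_le_sum_of_subset_of_nonneg (Finset.range_subset_range.2 h) (fun j _ _ => hxe j)
  have hF0 : F 0 = 0 := by simp [hF, P]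
  have hFtop : F (k + 1) = 1 := (P_top k x).trans hx.2
  have hF01 : ∀ n, n ≤ k + 1 → 0 ≤ F n ∧ F n ≤ 1 := fun n hn =>
    ⟨hF0 ▸ hmono (Nat.zero_le n), hFtop ▸ hmono hn⟩
  set g : ℕ → ℝ → ℝ := fun n t => sig (F n) t with hg
  set γ : ℝ → Fin (k + 1) → ℝ := fun t m => g (m.val + 1) t - g m.val t with hγ
  have hg0 : ∀ t, g 0 t = 0 := fun t => by rw [hg]; simp only [hF0]; exact sig_zero t
  have hgtop : ∀ t, g (k + 1) t = 1 := fun t => by rw [hg]; simp only [hFtop]; exact sig_one t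
  have hP : ∀ (t : ℝ) (n : ℕ), n ≤ k + 1 → P k (γ t) n = g n t := by
    intro t n hn
    have hcong : ∀ j ∈ Finset.range n, zext k (γ t) j = g (j + 1) t - g j t := by
      intro j hj
      have hj' : j < k + 1 := lt_of_lt_of_le (Finset.mem_range.1 hj) hn
      simp [zext, hj', hγ]
    rw [P, Finset.sum_congr rfl hcong, Finset.sum_range_sub (fun j => g j t), hg0 t, sub_zero]
  have hderiv : ∀ t, HasDerivAt γ (Wfield k (γ t)) t := by
    intro t
    rw [hasDerivAt_pi]
    intro m
    have ha := sig_hasDerivAt (hF01 (m.val + 1) m.isLt).1 (hF01 (m.val + 1) m.isLt).2 t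
    have hb := sig_hasDerivAt (hF01 m.val (le_of_lt m.isLt)).1 (hF01 m.val (le_of_lt m.isLt)).2 t
    have hsub := ha.sub hb
    convert hsub using 1
    · rfl
    show Wfield k (γ t) m = _
    rw [Wfield]
    rw [sum_filter_lt k (γ t) m, sum_filter_gt k (γ t) m,
      hP t m.val (le_of_lt m.isLt), hP t (m.val + 1) m.isLt, hP t (k + 1) le_rfl, hgtop t]
    show γ t m * (g m.val t - (1 - g (m.val + 1) t)) = _
    rw [hγ]
    ring
  have hmem : ∀ t, γ t ∈ stdSimplex ℝ (Fin (k + 1)) := by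
    intro t
    constructor
    · intro m
      exact sub_nonneg.2 (sig_mono (hF01 m.val (le_of_lt m.isLt)).1 (hmono (Nat.le_succ _))
        (hF01 (m.val + 1) m.isLt).2 t)
    · rw [← P_top k (γ t), hP t (k + 1) le_rfl, hgtop t]
  refine ⟨γ, hderiv, ?_, hmem⟩
  funext m
  show g (m.val + 1) 0 - g m.val 0 = x m
  rw [hg]
  simp only [sig_init]
  rw [hF]
  show P k x (m.val + 1) - P k x m.val = x m
  rw [P, P, Finset.sum_range_succ]
  simp [zext, m.isLt]


end WAux

open WAux

/-- Global flow of `W_k` on the simplex: every `x ∈ Δ_k` is the initial value of a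
unique trajectory of `W_k`, and this trajectory stays in `Δ_k` for all times. -/
theorem Wfield_global_flow (k : ℕ) (x : Fin (k + 1) → ℝ)
    (hx : x ∈ stdSimplex ℝ (Fin (k + 1))) :
    (∃! γ : ℝ → Fin (k + 1) → ℝ,
        (∀ t : ℝ, HasDerivAt γ (Wfield k (γ t)) t) ∧ γ 0 = x) ∧
    (∀ γ : ℝ → Fin (k + 1) → ℝ,
        (∀ t : ℝ, HasDerivAt γ (Wfield k (γ t)) t) → γ 0 = x →
        ∀ t : ℝ, γ t ∈ stdSimplex ℝ (Fin (k + 1))) := by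

  obtain ⟨γ, hd, h0, hmem⟩ := exists_sol k x hx
  constructor
  · exact ⟨γ, ⟨hd, h0⟩, fun γ' ⟨hd', h0'⟩ => sol_unique hd' hd (by rw [h0', h0])⟩
  · intro γ' hd' h0' t
    have : γ' = γ := sol_unique hd' hd (by rw [h0', h0])
    rw [this]
    exact hmem t
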